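/- Let n ≥ 7 and let S be a nonlocal metric basis of the wheel W_{1,n} (so S ⊆ V(C_n), |S| ≥ 2). If some gap A_{i,j} of S contains at least 2 vertices, then each of the two neighboring gaps of A_{i,j} contains at most one vertex. -/

import Mathlib

/-- `X` is a nonlocal resolving set of `G`: every pair of distinct non-adjacent
vertices is resolved by some vertex of `X`. -/
def IsNLResolving {V : Type*} (G : SimpleGraph V) (X : Finset V) : Prop :=
  ∀ u v : V, u ≠ v → ¬ G.Adj u v → ∃ x ∈ X, G.dist u x ≠ G.dist v x

/-- The nonlocal metric dimension of `G`. -/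
noncomputable def nldim {V : Type*} [Fintype V] (G : SimpleGraph V) : ℕ :=
  sInf {n | ∃ X : Finset V, X.card = n ∧ IsNLResolving G X}

/-- `X` is a resolving set of `G`. -/
def IsResolving {V : Type*} (G : SimpleGraph V) (X : Finset V) : Prop :=
  ∀ u v : V, u ≠ v → ∃ x ∈ X, G.dist u x ≠ G.dist v x

/-- The metric dimension of `G`. -/
noncomputable def metricDim {V : Type*} [Fintype V] (G : SimpleGraph V) : ℕ :=
  sInf {n | ∃ X : Finset V, X.card = n ∧ IsResolving G X}

/-- The corona product `G ⊙ H`: one copy of `G` and, for each vertex `g` of `G`,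
a copy of `H` whose vertices are all joined to `g`. -/
def corona {V W : Type*} (G : SimpleGraph V) (H : SimpleGraph W) :
    SimpleGraph (V ⊕ V × W) :=
  SimpleGraph.fromRel (fun a b =>
    match a, b with
    | Sum.inl g, Sum.inl g' => G.Adj g g'
    | Sum.inl g, Sum.inr p => g = p.1
    | Sum.inr p, Sum.inr q => p.1 = q.1 ∧ H.Adj p.2 q.2
    | _, _ => False)

/-- The join `H + K₁`: a new vertex (`none`) adjacent to every vertex of `H`. -/
def joinK1 {W : Type*} (H : SimpleGraph W) : SimpleGraph (Option W) :=
  SimpleGraph.fromRel (fun a b =>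
    a = none ∨ ∃ w w', a = some w ∧ b = some w' ∧ H.Adj w w')

/-- The wheel `W_{1,n} = K₁ + Cₙ`, with central vertex `none`. -/
def wheel (n : ℕ) : SimpleGraph (Option (Fin n)) :=
  joinK1 (SimpleGraph.cycleGraph n)

/-- `A_{i,j}` is a gap of `X ⊆ V(Cₙ)`: `i, j ∈ X`, `i ≠ j`, and no vertex of
`{i+1, …, j-1}` (cyclically) lies in `X`. -/
def IsGap {n : ℕ} (X : Finset (Fin n)) (i j : Fin n) : Prop :=
  i ∈ X ∧ j ∈ X ∧ i ≠ j ∧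
    ∀ k : Fin n, 0 < (k - i).val → (k - i).val < (j - i).val → k ∉ X

/-- The number of vertices in the gap `A_{i,j} = {i+1, …, j-1}`. -/
def gapSize {n : ℕ} (i j : Fin n) : ℕ := (j - i).val - 1

/-- The edge cover number `β'(G)`: the least number of edges of `G` covering all
vertices. -/
noncomputable def edgeCoverNum {V : Type*} [Fintype V] (G : SimpleGraph V) : ℕ :=
  sInf {n | ∃ F : Finset (Sym2 V), F.card = n ∧ ↑F ⊆ G.edgeSet ∧ ∀ v : V, ∃ e ∈ F, v ∈ e}

section Aux

open scoped Fin.CommRing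

lemma wheel_adj_none {n : ℕ} (a : Fin n) : (wheel n).Adj none (some a) := by
  simp [wheel, joinK1, SimpleGraph.fromRel_adj]

lemma wheel_adj_some {n : ℕ} (a b : Fin n) :
    (wheel n).Adj (some a) (some b) ↔ (SimpleGraph.cycleGraph n).Adj a b := by
  simp only [wheel, joinK1, SimpleGraph.fromRel_adj, Option.some.injEq, ne_eq,
    reduceCtorEq, false_or]
  constructor
  · rintro ⟨hne, h | h⟩
    · obtain ⟨w, w', hw, hw', hadj⟩ := h
      cases hw; cases hw'; exact hadj
    · obtain ⟨w, w', hw, hw', hadj⟩ := h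
      cases hw; cases hw'; exact hadj.symm
  · intro h
    exact ⟨fun he => h.ne he, Or.inl ⟨a, b, rfl, rfl, h⟩⟩

lemma wheel_dist_two {n : ℕ} {a b : Fin n} (hne : a ≠ b)
    (hadj : ¬ (SimpleGraph.cycleGraph n).Adj a b) :
    (wheel n).dist (some a) (some b) = 2 := by
  have h1 : (wheel n).Adj (some a) none := (wheel_adj_none a).symm
  have h2 : (wheel n).Adj none (some b) := wheel_adj_none b
  have hle : (wheel n).dist (some a) (some b) ≤ 2 := by
    have := SimpleGraph.dist_le
      (SimpleGraph.Walk.cons h1 (SimpleGraph.Walk.cons h2 SimpleGraph.Walk.nil))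
    simpa using this
  have h0 : (wheel n).dist (some a) (some b) ≠ 0 := by
    intro h
    rcases SimpleGraph.dist_eq_zero_iff_eq_or_not_reachable.mp h with h' | h'
    · exact hne (by simpa using h')
    · exact h' ⟨SimpleGraph.Walk.cons h1 (SimpleGraph.Walk.cons h2 SimpleGraph.Walk.nil)⟩
  have hone : (wheel n).dist (some a) (some b) ≠ 1 := by
    intro h
    exact hadj ((wheel_adj_some a b).mp (SimpleGraph.dist_eq_one_iff_adj.mp h))
  omega

lemma key_unresolved {n : ℕ} [NeZero n] (hn : 7 ≤ n) (S : Finset (Fin n))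
    (hres : IsNLResolving (wheel n) (S.image some)) (m : Fin n)
    (hm1 : m - 1 ∉ S) (hm2 : m - 2 ∉ S) (hp1 : m + 1 ∉ S) (hp2 : m + 2 ∉ S) :
    False := by
  have hcast : ∀ k : ℕ, k < n → ((k : Fin n)).val = k := fun k hk =>
    Fin.val_cast_of_lt hk
  have hv1 : (1 : Fin n).val = 1 := by
    have h : (1 : Fin n) = ((1 : ℕ) : Fin n) := by norm_cast
    rw [h, hcast 1 (by omega)]
  have hv2 : (2 : Fin n).val = 2 := by
    have h : (2 : Fin n) = ((2 : ℕ) : Fin n) := by norm_cast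
    rw [h, hcast 2 (by omega)]
  have hv3 : (3 : Fin n).val = 3 := by
    have h : (3 : Fin n) = ((3 : ℕ) : Fin n) := by norm_cast
    rw [h, hcast 3 (by omega)]
  have hune : m - 1 ≠ m + 1 := by
    intro h
    have h3 : (2 : Fin n) = 0 := by linear_combination -h
    have := congrArg Fin.val h3
    rw [hv2, Fin.val_zero] at this
    omega
  have hnadj : ¬ (SimpleGraph.cycleGraph n).Adj (m - 1) (m + 1) := by
    rw [SimpleGraph.cycleGraph_adj']
    push_neg
    constructor
    · intro h
      have h' : m - 1 - (m + 1) = 1 := Fin.ext (by rw [hv1]; exact h)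
      have h3 : (3 : Fin n) = 0 := by linear_combination -h'
      have := congrArg Fin.val h3
      rw [hv3, Fin.val_zero] at this
      omega
    · intro h
      have h' : m + 1 - (m - 1) = (2 : Fin n) := by ring
      rw [h', hv2] at h
      omega
  obtain ⟨x, hx, hdx⟩ := hres (some (m - 1)) (some (m + 1)) (by simpa using hune)
    (by rw [wheel_adj_some]; exact hnadj)
  obtain ⟨s, hs, rfl⟩ := Finset.mem_image.mp hx
  by_cases hsm : s = m
  · have ha1 : (SimpleGraph.cycleGraph n).Adj (m - 1) s := by
      rw [SimpleGraph.cycleGraph_adj']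
      right
      have h : s - (m - 1) = (1 : Fin n) := by rw [hsm]; ring
      rw [h, hv1]
    have ha2 : (SimpleGraph.cycleGraph n).Adj (m + 1) s := by
      rw [SimpleGraph.cycleGraph_adj']
      left
      have h : m + 1 - s = (1 : Fin n) := by rw [hsm]; ring
      rw [h, hv1]
    rw [SimpleGraph.dist_eq_one_iff_adj.mpr ((wheel_adj_some _ s).mpr ha1),
      SimpleGraph.dist_eq_one_iff_adj.mpr ((wheel_adj_some _ s).mpr ha2)] at hdx
    exact hdx rfl
  · have hd1 : (wheel n).dist (some (m - 1)) (some s) = 2 := by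
      apply wheel_dist_two
      · intro h; exact hm1 (by rwa [h])
      · rw [SimpleGraph.cycleGraph_adj']
        push_neg
        constructor
        · intro h
          have h' : m - 1 - s = 1 := Fin.ext (by rw [hv1]; exact h)
          have hse : s = m - 2 := by linear_combination -h'
          exact hm2 (by rwa [hse] at hs)
        · intro h
          have h' : s - (m - 1) = 1 := Fin.ext (by rw [hv1]; exact h)
          have hse : s = m := by linear_combination h'
          exact hsm hse
    have hd2 : (wheel n).dist (some (m + 1)) (some s) = 2 := by
      apply wheel_dist_two
      · intro h; exact hp1 (by rwa [h])
      · rw [SimpleGraph.cycleGraph_adj']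
        push_neg
        constructor
        · intro h
          have h' : m + 1 - s = 1 := Fin.ext (by rw [hv1]; exact h)
          have hse : s = m := by linear_combination -h'
          exact hsm hse
        · intro h
          have h' : s - (m + 1) = 1 := Fin.ext (by rw [hv1]; exact h)
          have hse : s = m + 2 := by linear_combination h'
          exact hp2 (by rwa [hse] at hs)
    rw [hd1, hd2] at hdx
    exact hdx rfl

lemma gap_notmem {n : ℕ} [NeZero n] (hn : 7 ≤ n) {S : Finset (Fin n)} {i j : Fin n}
    (hg : IsGap S i j) (h3 : 3 ≤ (j - i).val) :
    i + 1 ∉ S ∧ i + 2 ∉ S ∧ j - 1 ∉ S ∧ j - 2 ∉ S := by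
  have hcast : ∀ k : ℕ, k < n → ((k : Fin n)).val = k := fun k hk =>
    Fin.val_cast_of_lt hk
  have hv1 : (1 : Fin n).val = 1 := by
    have h : (1 : Fin n) = ((1 : ℕ) : Fin n) := by norm_cast
    rw [h, hcast 1 (by omega)]
  have hv2 : (2 : Fin n).val = 2 := by
    have h : (2 : Fin n) = ((2 : ℕ) : Fin n) := by norm_cast
    rw [h, hcast 2 (by omega)]
  obtain ⟨-, -, -, hgap⟩ := hg
  have hs1 : ((j - i) - 1).val = (j - i).val - 1 := by
    rw [Fin.coe_sub_iff_le.mpr (by rw [Fin.le_def, hv1]; omega), hv1]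
  have hs2 : ((j - i) - 2).val = (j - i).val - 2 := by
    rw [Fin.coe_sub_iff_le.mpr (by rw [Fin.le_def, hv2]; omega), hv2]
  refine ⟨hgap _ ?_ ?_, hgap _ ?_ ?_, hgap _ ?_ ?_, hgap _ ?_ ?_⟩
  · rw [show i + 1 - i = (1 : Fin n) by ring, hv1]; omega
  · rw [show i + 1 - i = (1 : Fin n) by ring, hv1]; omega
  · rw [show i + 2 - i = (2 : Fin n) by ring, hv2]; omega
  · rw [show i + 2 - i = (2 : Fin n) by ring, hv2]; omega
  · rw [show j - 1 - i = (j - i) - 1 by ring, hs1]; omega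
  · rw [show j - 1 - i = (j - i) - 1 by ring, hs1]; omega
  · rw [show j - 2 - i = (j - i) - 2 by ring, hs2]; omega
  · rw [show j - 2 - i = (j - i) - 2 by ring, hs2]; omega

end Aux


/-- If `S ⊆ V(Cₙ)` is a nonlocal metric basis of the wheel
`W_{1,n}`, `n ≥ 7`, `|S| ≥ 2`, and a gap `A_{i,j}` of `S` has at least `2`
vertices, then each of its two neighboring gaps has at most one vertex. -/
theorem stmt_11 (n : ℕ) (hn : 7 ≤ n) (S : Finset (Fin n)) (hS : 2 ≤ S.card)
    (hres : IsNLResolving (wheel n) (S.image some))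
    (hmin : (S.image some).card = nldim (wheel n)) :
    ∀ i j : Fin n, IsGap S i j → 2 ≤ gapSize i j →
      (∀ h : Fin n, IsGap S h i → gapSize h i ≤ 1) ∧
      (∀ k : Fin n, IsGap S j k → gapSize j k ≤ 1) := by
  haveI : NeZero n := ⟨by omega⟩
  intro i j hg hsize
  have h3 : 3 ≤ (j - i).val := by
    have := hsize
    unfold gapSize at this
    omega
  obtain ⟨hip1, hip2, hjm1, hjm2⟩ := gap_notmem hn hg h3
  constructor
  · intro h hgh
    by_contra hcon
    push_neg at hcon
    have h3' : 3 ≤ (i - h).val := by unfold gapSize at hcon; omega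
    obtain ⟨-, -, him1, him2⟩ := gap_notmem hn hgh h3'
    exact key_unresolved hn S hres i him1 him2 hip1 hip2
  · intro k hgk
    by_contra hcon
    push_neg at hcon
    have h3' : 3 ≤ (k - j).val := by unfold gapSize at hcon; omega
    obtain ⟨hjp1, hjp2, -, -⟩ := gap_notmem hn hgk h3'
    exact key_unresolved hn S hres j hjm1 hjm2 hjp1 hjp2
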